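/- Let a, z, x ∈ ℂⁿ with a*z ≠ 0. Define T := 2(1 − |a*x|/|a*z|) Re(h* a a* z e^{−iφ}) − (|a*z| − |a*x|)², where z = e^{iφ}(x + h) for some φ ∈ ℝ and h ∈ ℂⁿ. Then |T| ≤ 3|a*h|². -/

import Mathlib

lemma aux10 (α β : ℂ) (hne : α + β ≠ 0) :
    |2*(1 - ‖α‖/‖α+β‖) * ((starRingEnd ℂ β) * (α+β)).re - (‖α+β‖ - ‖α‖)^2|
      ≤ 3 * ‖β‖^2 := by
  have hr : 0 < ‖α+β‖ := norm_pos_iff.mpr hne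
  have hre : ((starRingEnd ℂ β) * (α+β)).re = (‖α+β‖^2 - ‖α‖^2 + ‖β‖^2)/2 := by
    simp only [Complex.sq_norm, Complex.normSq_apply, Complex.mul_re,
      Complex.add_re, Complex.add_im, Complex.conj_re, Complex.conj_im]
    ring
  set r := ‖α+β‖ with hrdef
  set s := ‖α‖ with hsdef
  set b := ‖β‖ with hbdef
  have hs : 0 ≤ s := norm_nonneg _
  have hb : 0 ≤ b := norm_nonneg _
  have hd : |r - s| ≤ b := by
    have := abs_norm_sub_norm_le (α+β) α
    simpa using this
  have hbs : b ≤ r + s := by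
    have : β = (α+β) - α := by ring
    calc b = ‖(α+β) - α‖ := by rw [← this]
      _ ≤ r + s := norm_sub_le _ _
  rw [hre]
  have key : 2*(1 - s/r) * ((r^2 - s^2 + b^2)/2) - (r - s)^2
      = ((r-s)^2*s + (r-s)*b^2)/r := by
    field_simp
    ring
  rw [key, abs_div, abs_of_pos hr, div_le_iff₀ hr]
  rw [abs_le] at hd ⊢
  obtain ⟨hd1, hd2⟩ := hd
  have h1 : 0 ≤ (b - (r-s))*(b+(r-s)) := mul_nonneg (by linarith) (by linarith)
  constructor
  · rcases le_or_gt s r with hc | hc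
    · nlinarith [mul_nonneg hs (sq_nonneg (r-s)),
        mul_nonneg (by linarith : (0:ℝ) ≤ r-s) (mul_nonneg hb hb),
        mul_nonneg hr.le (mul_nonneg hb hb)]
    · have h2 : 0 ≤ (s-r)*(b+(s-r))*(2*r - (b-(s-r))) :=
        mul_nonneg (mul_nonneg (by linarith) (by linarith)) (by linarith)
      have h3 : 0 ≤ r*((3*b+(s-r))*(b-(s-r))) :=
        mul_nonneg hr.le (mul_nonneg (by linarith) (by linarith))
      nlinarith [h2, h3]
  · nlinarith [mul_nonneg hs h1, mul_nonneg hr.le (mul_nonneg hb hb)]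

theorem stmt_10 (n : ℕ) (a z x h : EuclideanSpace ℂ (Fin n)) (φ : ℝ)
    (hz : z = Complex.exp (φ * Complex.I) • (x + h))
    (hne : (inner ℂ a z : ℂ) ≠ 0) :
    |2*(1 - ‖(inner ℂ a x : ℂ)‖/‖(inner ℂ a z : ℂ)‖) *
        ((inner ℂ h a : ℂ) * (inner ℂ a z : ℂ) * Complex.exp (-(φ * Complex.I))).re
      - (‖(inner ℂ a z : ℂ)‖ - ‖(inner ℂ a x : ℂ)‖)^2|
      ≤ 3 * ‖(inner ℂ a h : ℂ)‖^2 := by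
  set α := (inner ℂ a x : ℂ) with hα
  set β := (inner ℂ a h : ℂ) with hβ
  have hγ : (inner ℂ a z : ℂ) = Complex.exp (φ*Complex.I) * (α + β) := by
    rw [hz]
    simp [inner_smul_right, inner_add_right, hα, hβ, mul_add]
  have hha : (inner ℂ h a : ℂ) = starRingEnd ℂ β := by
    rw [hβ, ← inner_conj_symm]
  have hexp : ‖Complex.exp ((φ:ℂ)*Complex.I)‖ = 1 := by
    simpa using Complex.norm_exp_ofReal_mul_I φ
  have hnorm : ‖(inner ℂ a z : ℂ)‖ = ‖α+β‖ := by
    rw [hγ, norm_mul, hexp, one_mul]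
  have hee : Complex.exp ((φ:ℂ)*Complex.I) * Complex.exp (-((φ:ℂ)*Complex.I)) = 1 := by
    rw [← Complex.exp_add]; simp
  have hre : ((inner ℂ h a : ℂ) * (inner ℂ a z : ℂ) * Complex.exp (-((φ:ℂ)*Complex.I)))
      = starRingEnd ℂ β * (α+β) := by
    rw [hha, hγ]
    calc starRingEnd ℂ β * (Complex.exp ((φ:ℂ)*Complex.I) * (α + β)) * Complex.exp (-((φ:ℂ)*Complex.I))
        = starRingEnd ℂ β * (α+β) * (Complex.exp ((φ:ℂ)*Complex.I) * Complex.exp (-((φ:ℂ)*Complex.I))) := by ring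
      _ = starRingEnd ℂ β * (α+β) := by rw [hee, mul_one]
  have hne' : α + β ≠ 0 := by
    intro hc
    apply hne
    rw [hγ, hc, mul_zero]
  rw [hnorm, hre]
  exact aux10 α β hne'
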